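/- Let q ∈ ℕ, 1 ≤ n ≤ q, and let φ_1,…,φ_n ∈ C[0,q]_Z be linearly independent. The following are equivalent: (a) {φ_k}_{k=1}^n is a T_Z-system; (b) for every f ∈ C[0,q]_Z, every best uniform approximant p* ∈ L_n of f admits an alternance set of length n+1; (c) the determinants Δ(φ_1,…,φ_n; ν_1,…,ν_n), taken over all integers 0 ≤ ν_1 < ⋯ < ν_n ≤ q, are all nonzero and all have the same sign. -/

import Mathlib

namespace DiscPaper

/-- `ν` is a zero (of the first or second type) of the discrete function `f` on `[0,q]_ℤ`. -/
def IsZero (q : ℕ) (f : ℕ → ℝ) (ν : ℕ) : Prop :=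
  (ν ≤ q ∧ f ν = 0) ∨ (1 ≤ ν ∧ ν ≤ q ∧ f (ν - 1) * f ν < 0)

/-- `N q f` is the number of zeros (of both types) of `f` on `[0,q]_ℤ`. -/
noncomputable def N (q : ℕ) (f : ℕ → ℝ) : ℕ := {ν : ℕ | IsZero q f ν}.ncard

/-- `N₀ q f` is the number of zeros of the first type of `f` on `[0,q]_ℤ`. -/
noncomputable def N0 (q : ℕ) (f : ℕ → ℝ) : ℕ := {ν : ℕ | ν ≤ q ∧ f ν = 0}.ncard

/-- Number of sign changes of `g` on `[0,q]_ℤ`. -/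
noncomputable def signChanges (q : ℕ) (g : ℕ → ℝ) : ℕ :=
  {ν : ℕ | 1 ≤ ν ∧ ν ≤ q ∧ g (ν - 1) * g ν < 0}.ncard

/-- `g` is obtained from `f` by replacing all its zero values on `[0,q]_ℤ` by
arbitrary nonzero values. -/
def Admissible (q : ℕ) (f g : ℕ → ℝ) : Prop :=
  (∀ ν ≤ q, g ν ≠ 0) ∧ ∀ ν ≤ q, f ν ≠ 0 → g ν = f ν

/-- `S⁻(f)`: least number of sign changes over all admissible replacements. -/
noncomputable def Sminus (q : ℕ) (f : ℕ → ℝ) : ℕ :=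
  sInf {s | ∃ g, Admissible q f g ∧ signChanges q g = s}

/-- `S⁺(f)`: largest number of sign changes over all admissible replacements. -/
noncomputable def Splus (q : ℕ) (f : ℕ → ℝ) : ℕ :=
  sSup {s | ∃ g, Admissible q f g ∧ signChanges q g = s}
/-- The polynomial `Σ aₖ φₖ` with respect to the system `φ`. -/
noncomputable def poly (n : ℕ) (φ : Fin n → ℕ → ℝ) (a : Fin n → ℝ) : ℕ → ℝ :=
  fun ν => ∑ k, a k * φ k ν

/-- Linear independence of the discrete functions `φ₁,…,φₙ` on `[0,q]_ℤ`. -/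
def LinIndepOn (q n : ℕ) (φ : Fin n → ℕ → ℝ) : Prop :=
  LinearIndependent ℝ (fun k : Fin n => fun ν : Fin (q + 1) => φ k ν)

/-- `{φₖ}` is a `T_ℤ`-system on `[0,q]_ℤ`: every nontrivial polynomial has at most
`n - 1` zeros (of both types). -/
def IsTZ (q n : ℕ) (φ : Fin n → ℕ → ℝ) : Prop :=
  ∀ a : Fin n → ℝ, a ≠ 0 → N q (poly n φ a) ≤ n - 1

/-- The uniform norm of a discrete function on `[0,q]_ℤ`. -/
noncomputable def normZ (q : ℕ) (f : ℕ → ℝ) : ℝ :=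
  (Finset.range (q + 1)).sup' (Finset.nonempty_range_iff.mpr q.succ_ne_zero)
    (fun ν => |f ν|)

/-- `poly n φ a` is a best uniform approximant of `f` from `L_n`. -/
noncomputable def IsBestApprox (q n : ℕ) (φ : Fin n → ℕ → ℝ) (f : ℕ → ℝ)
    (a : Fin n → ℝ) : Prop :=
  ∀ b : Fin n → ℝ,
    normZ q (fun ν => f ν - poly n φ a ν) ≤ normZ q (fun ν => f ν - poly n φ b ν)

/-- The best approximant `poly n φ a` of `f` admits a Chebyshev alternance set of
length `n+1`. -/
noncomputable def HasAlternance (q n : ℕ) (φ : Fin n → ℕ → ℝ) (f : ℕ → ℝ)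
    (a : Fin n → ℝ) : Prop :=
  ∃ ν : Fin (n + 1) → ℕ, StrictMono ν ∧ (∀ i, ν i ≤ q) ∧
    ∃ ε : ℝ, (ε = 1 ∨ ε = -1) ∧
      ∀ i : Fin (n + 1),
        ε * (-1) ^ (i : ℕ) * (poly n φ a (ν i) - f (ν i)) =
          normZ q (fun μ => poly n φ a μ - f μ)

/-- All the determinants `Δ(φ₁,…,φₙ; ν₁,…,νₙ)` over increasing choices
`0 ≤ ν₁ < ⋯ < νₙ ≤ q` are nonzero and have the same sign. -/
def DetsSameSign (q n : ℕ) (φ : Fin n → ℕ → ℝ) : Prop :=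
  ∃ ε : ℝ, (ε = 1 ∨ ε = -1) ∧
    ∀ ν : Fin n → ℕ, StrictMono ν → (∀ i, ν i ≤ q) →
      0 < ε * Matrix.det (Matrix.of fun i j : Fin n => φ j (ν i))

/-! utilities -/

lemma abs_le_normZ (q : ℕ) (f : ℕ → ℝ) {x : ℕ} (hx : x ≤ q) : |f x| ≤ normZ q f := by
  unfold normZ
  exact Finset.le_sup' (fun ν => |f ν|) (Finset.mem_range.mpr (Nat.lt_succ_of_le hx))

lemma normZ_nonneg (q : ℕ) (f : ℕ → ℝ) : 0 ≤ normZ q f :=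
  le_trans (abs_nonneg _) (abs_le_normZ q f (Nat.zero_le q))

lemma exists_normZ_eq (q : ℕ) (f : ℕ → ℝ) : ∃ x ≤ q, normZ q f = |f x| := by
  obtain ⟨x, hx, h⟩ := Finset.exists_mem_eq_sup' (Finset.nonempty_range_iff.mpr q.succ_ne_zero)
    (fun ν => |f ν|)
  exact ⟨x, Nat.lt_succ_iff.mp (Finset.mem_range.mp hx), h⟩

lemma normZ_lt_iff (q : ℕ) (f : ℕ → ℝ) {c : ℝ} :
    normZ q f < c ↔ ∀ x ≤ q, |f x| < c := by
  rw [normZ, Finset.sup'_lt_iff]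
  constructor
  · intro h x hx; exact h x (Finset.mem_range.mpr (Nat.lt_succ_of_le hx))
  · intro h x hx; exact h x (Nat.lt_succ_iff.mp (Finset.mem_range.mp hx))

lemma normZ_le_iff (q : ℕ) (f : ℕ → ℝ) {c : ℝ} :
    normZ q f ≤ c ↔ ∀ x ≤ q, |f x| ≤ c := by
  constructor
  · intro h x hx; exact le_trans (abs_le_normZ q f hx) h
  · intro h; exact Finset.sup'_le _ _ fun x hx =>
      h x (Nat.lt_succ_iff.mp (Finset.mem_range.mp hx))

lemma normZ_congr_abs (q : ℕ) {f g : ℕ → ℝ} (h : ∀ x ≤ q, |f x| = |g x|) :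
    normZ q f = normZ q g := by
  unfold normZ
  apply Finset.sup'_congr _ rfl
  intro x hx; exact h x (Nat.lt_succ_iff.mp (Finset.mem_range.mp hx))

lemma poly_zero (n : ℕ) (φ : Fin n → ℕ → ℝ) (x : ℕ) : poly n φ 0 x = 0 := by
  simp [poly]

lemma poly_sub_smul (n : ℕ) (φ : Fin n → ℕ → ℝ) (a h : Fin n → ℝ) (δ : ℝ) (x : ℕ) :
    poly n φ (a - δ • h) x = poly n φ a x - δ * poly n φ h x := by
  simp [poly, sub_mul, Finset.sum_sub_distrib, Finset.mul_sum, mul_assoc]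

lemma strictMono_fin_le {m : ℕ} {ν : Fin m → ℕ} (h : StrictMono ν) (i : Fin m) :
    (i : ℕ) ≤ ν i := by
  obtain ⟨k, hk⟩ := i
  induction k with
  | zero => exact Nat.zero_le _
  | succ k ih =>
      have hk' : k < m := Nat.lt_of_succ_lt hk
      have h1 : ν ⟨k, hk'⟩ < ν ⟨k + 1, hk⟩ := h (by simp [Fin.lt_def])
      have h2 := ih hk'
      simpa using Nat.lt_of_le_of_lt h2 h1

/-- number of zeros bound from injective family of zeros -/
lemma le_N_of_zeros {q m : ℕ} {p : ℕ → ℝ} {μ : Fin m → ℕ} (hinj : Function.Injective μ)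
    (hz : ∀ i, IsZero q p (μ i)) : m ≤ N q p := by
  have hsub : Set.range μ ⊆ {ν : ℕ | IsZero q p ν} := by
    rintro x ⟨i, rfl⟩; exact hz i
  have hfin : {ν : ℕ | IsZero q p ν}.Finite := by
    apply (Set.finite_Iic q).subset
    rintro x (⟨h1, -⟩ | ⟨-, h1, -⟩) <;> exact h1
  have h1 := Set.ncard_le_ncard hsub hfin
  have h2 : (Set.range μ).ncard = m := by
    rw [← Nat.card_coe_set_eq, Nat.card_range_of_injective hinj, Nat.card_eq_fintype_card,
      Fintype.card_fin]
  rw [h2] at h1; exact h1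


/-! determinant utilities -/

/-- the determinant at a node configuration -/
noncomputable def Dmat {n : ℕ} (φ : Fin n → ℕ → ℝ) (ν : Fin n → ℕ) : ℝ :=
  Matrix.det (Matrix.of fun i j : Fin n => φ j (ν i))

/-- if the determinant at nodes vanishes, a nontrivial polynomial vanishes at all nodes -/
lemma exists_poly_zeros_of_det_eq_zero {n : ℕ} (φ : Fin n → ℕ → ℝ) (ν : Fin n → ℕ)
    (h : Dmat φ ν = 0) : ∃ a : Fin n → ℝ, a ≠ 0 ∧ ∀ i, poly n φ a (ν i) = 0 := by
  obtain ⟨a, ha, hva⟩ := Matrix.exists_mulVec_eq_zero_iff.mpr h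
  refine ⟨a, ha, fun i => ?_⟩
  have := congrFun hva i
  simpa [Matrix.mulVec, dotProduct, poly, mul_comm] using this

/-- interpolation at nodes with nonvanishing determinant -/
lemma exists_interp {n : ℕ} (φ : Fin n → ℕ → ℝ) (ν : Fin n → ℕ)
    (h : Dmat φ ν ≠ 0) (y : Fin n → ℝ) : ∃ a : Fin n → ℝ, ∀ i, poly n φ a (ν i) = y i := by
  set M : Matrix (Fin n) (Fin n) ℝ := Matrix.of fun i j : Fin n => φ j (ν i) with hM
  have hu : IsUnit M.det := isUnit_iff_ne_zero.mpr h
  refine ⟨M⁻¹.mulVec y, fun i => ?_⟩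
  have : M.mulVec (M⁻¹.mulVec y) = y := by
    rw [Matrix.mulVec_mulVec, Matrix.mul_nonsing_inv _ hu, Matrix.one_mulVec]
  have := congrFun this i
  simpa [Matrix.mulVec, dotProduct, poly, mul_comm, hM] using this

/-- rows of a nonsingular node matrix are linearly independent -/
lemma rows_indep {n : ℕ} (φ : Fin n → ℕ → ℝ) (ν : Fin n → ℕ)
    (h : Dmat φ ν ≠ 0) (g : Fin n → ℝ) (hg : ∀ j, ∑ i, g i * φ j (ν i) = 0) : g = 0 := by
  by_contra hgne
  apply h
  set M : Matrix (Fin n) (Fin n) ℝ := Matrix.of fun i j : Fin n => φ j (ν i) with hM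
  have : M.transpose.mulVec g = 0 := by
    funext j
    simpa [Matrix.mulVec, dotProduct, Matrix.transpose, hM, mul_comm] using hg j
  have hdet : M.transpose.det = 0 := Matrix.exists_mulVec_eq_zero_iff.mp ⟨g, hgne, this⟩
  rw [Matrix.det_transpose] at hdet
  exact hdet

/-- Cramer-type dependence among n+1 row vectors -/
lemma cramer_dep {n : ℕ} (B : Fin (n + 1) → Fin n → ℝ) (j : Fin n) :
    ∑ i : Fin (n + 1), (-1 : ℝ) ^ (i : ℕ) *
      Matrix.det (Matrix.of fun r c : Fin n => B (Fin.succAbove i r) c) * B i j = 0 := by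
  set C : Matrix (Fin (n + 1)) (Fin (n + 1)) ℝ :=
    Matrix.of fun r => Fin.cons (B r j) (B r) with hC
  have hdet : C.det = 0 := by
    apply Matrix.det_zero_of_column_eq (i := 0) (j := Fin.succ j) (Fin.succ_ne_zero j).symm
    intro k
    simp [hC]
  rw [Matrix.det_succ_column_zero] at hdet
  rw [← hdet]
  apply Finset.sum_congr rfl
  intro i _
  have hsub : (C.submatrix (Fin.succAbove i) Fin.succ) =
      Matrix.of fun r c : Fin n => B (Fin.succAbove i r) c := by
    ext r c
    simp [hC, Matrix.submatrix]
  rw [hsub]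
  simp [hC]
  ring


/-! connectivity of configurations -/

lemma detsSameSign_of_adj (q n : ℕ) (hn1 : 1 ≤ n) (hnq : n ≤ q) (φ : Fin n → ℕ → ℝ)
    (h0 : ∀ ν : Fin n → ℕ, StrictMono ν → (∀ i, ν i ≤ q) → Dmat φ ν ≠ 0)
    (hadj : ∀ (ν : Fin n → ℕ) (k : Fin n), StrictMono ν → (∀ i, ν i ≤ q) →
      StrictMono (Function.update ν k (ν k + 1)) →
      (∀ i, Function.update ν k (ν k + 1) i ≤ q) →
      0 < Dmat φ ν * Dmat φ (Function.update ν k (ν k + 1))) :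
    DetsSameSign q n φ := by
  classical
  set base : Fin n → ℕ := fun i => (i : ℕ) with hbase
  have hbmono : StrictMono base := fun i j hij => hij
  have hbq : ∀ i, base i ≤ q := fun i => by
    have := i.isLt; simp only [hbase]; omega
  have key : ∀ m : ℕ, ∀ ν : Fin n → ℕ, StrictMono ν → (∀ i, ν i ≤ q) →
      (∑ i, ν i) = m → 0 < Dmat φ base * Dmat φ ν := by
    intro m
    induction m using Nat.strong_induction_on with
    | _ m IH =>
      intro ν hmono hq hsum
      by_cases hb : ν = base
      · rw [hb]; exact mul_self_pos.mpr (h0 base hbmono hbq)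
      · -- find minimal k with ν k ≠ k
        have hSne : (Finset.univ.filter (fun k : Fin n => ν k ≠ (k : ℕ))).Nonempty := by
          by_contra hc
          apply hb
          funext i
          have := Finset.not_nonempty_iff_eq_empty.mp hc
          have hi : i ∉ Finset.univ.filter (fun k : Fin n => ν k ≠ (k : ℕ)) := by
            rw [this]; exact Finset.notMem_empty i
          simp at hi
          exact hi
        set k := (Finset.univ.filter (fun k : Fin n => ν k ≠ (k : ℕ))).min' hSne with hk
        have hkmem : ν k ≠ (k : ℕ) := by
          have := (Finset.univ.filter (fun k : Fin n => ν k ≠ (k : ℕ))).min'_mem hSne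
          rw [← hk] at this
          simpa using this
        have hmin : ∀ j : Fin n, j < k → ν j = (j : ℕ) := by
          intro j hj
          by_contra hc
          have : k ≤ j := Finset.min'_le _ j (by simpa using hc)
          exact absurd hj (not_lt.mpr this)
        have hklt : (k : ℕ) < ν k := lt_of_le_of_ne (strictMono_fin_le hmono k) (Ne.symm hkmem)
        set μ := Function.update ν k (ν k - 1) with hμ
        have hμk : μ k = ν k - 1 := Function.update_self _ _ _
        have hμne : ∀ i, i ≠ k → μ i = ν i := fun i hi => Function.update_of_ne hi _ _
        have hμmono : StrictMono μ := by
          intro i j hij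
          rcases eq_or_ne i k with rfl | hik
          · have hjk : k ≠ j := ne_of_lt hij
            rw [hμk, hμne j (Ne.symm hjk)]
            have := hmono hij
            omega
          · rcases eq_or_ne j k with rfl | hjk
            · rw [hμk, hμne i hik]
              have h1 : ν i = (i : ℕ) := hmin i hij
              have h2 : (i : ℕ) < (k : ℕ) := hij
              omega
            · rw [hμne i hik, hμne j hjk]; exact hmono hij
        have hμq : ∀ i, μ i ≤ q := by
          intro i
          rcases eq_or_ne i k with rfl | hik
          · rw [hμk]; exact le_trans (Nat.sub_le _ _) (hq _)
          · rw [hμne i hik]; exact hq i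
        have hup : ν = Function.update μ k (μ k + 1) := by
          funext i
          rcases eq_or_ne i k with rfl | hik
          · rw [Function.update_self, hμk]; omega
          · rw [Function.update_of_ne hik, hμne i hik]
        have hsum2 : (∑ i, μ i) < m := by
          rw [← hsum]
          apply Finset.sum_lt_sum
          · intro i _
            rcases eq_or_ne i k with rfl | hik
            · rw [hμk]; omega
            · rw [hμne i hik]
          · exact ⟨k, Finset.mem_univ k, by rw [hμk]; omega⟩
        have hIH : 0 < Dmat φ base * Dmat φ μ := IH _ hsum2 μ hμmono hμq rfl
        have hA : 0 < Dmat φ μ * Dmat φ ν := by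
          have hm' : StrictMono (Function.update μ k (μ k + 1)) := by
            rw [← hup]; exact hmono
          have hq' : ∀ i, Function.update μ k (μ k + 1) i ≤ q := by
            rw [← hup]; exact hq
          have := hadj μ k hμmono hμq hm' hq'
          rwa [← hup] at this
        have hsq : 0 < Dmat φ μ * Dmat φ μ := mul_self_pos.mpr (h0 μ hμmono hμq)
        have h3 : 0 < (Dmat φ base * Dmat φ ν) * (Dmat φ μ * Dmat φ μ) := by
          have h4 := mul_pos hIH hA
          have heq : (Dmat φ base * Dmat φ μ) * (Dmat φ μ * Dmat φ ν)
              = (Dmat φ base * Dmat φ ν) * (Dmat φ μ * Dmat φ μ) := by ring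
          rwa [heq] at h4
        rcases mul_pos_iff.mp h3 with ⟨h5, _⟩ | ⟨_, h6⟩
        · exact h5
        · exact absurd hsq (not_lt.mpr (le_of_lt h6))
  by_cases hpos : 0 < Dmat φ base
  · refine ⟨1, Or.inl rfl, fun ν hmono hq => ?_⟩
    have := key _ ν hmono hq rfl
    have : 0 < Dmat φ ν := by
      rcases mul_pos_iff.mp this with ⟨_, h⟩ | ⟨h, _⟩
      · exact h
      · exact absurd hpos (not_lt.mpr (le_of_lt h))
    simpa [Dmat] using this
  · refine ⟨-1, Or.inr rfl, fun ν hmono hq => ?_⟩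
    have hneg : Dmat φ base < 0 :=
      lt_of_le_of_ne (not_lt.mp hpos) (h0 base hbmono hbq)
    have := key _ ν hmono hq rfl
    have : Dmat φ ν < 0 := by
      rcases mul_pos_iff.mp this with ⟨h, _⟩ | ⟨_, h⟩
      · exact absurd h (not_lt.mpr (le_of_lt hneg))
      · exact h
    have : 0 < -Dmat φ ν := by linarith
    simpa [Dmat] using this


/-! the determinant as a polynomial in one node -/

lemma exists_coeff_det (n : ℕ) (φ : Fin n → ℕ → ℝ) (ν : Fin n → ℕ) (k : Fin n) :
    ∃ a : Fin n → ℝ, ∀ t : ℕ, Dmat φ (Function.update ν k t) = poly n φ a t := by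
  classical
  set R : Fin n → (Fin n → ℝ) := fun i => fun j => φ j (ν i) with hR
  set F := (Matrix.detRowAlternating : ((Fin n → ℝ) [⋀^Fin n]→ₗ[ℝ] ℝ)).toMultilinearMap with hF
  set L := F.toLinearMap R k with hL
  have hLdef : ∀ x : Fin n → ℝ, L x = F (Function.update R k x) := by
    intro x
    simp [hL, MultilinearMap.toLinearMap]
  refine ⟨fun j => L (fun j' => if j = j' then 1 else 0), fun t => ?_⟩
  have h1 : Dmat φ (Function.update ν k t) = L (fun j => φ j t) := by
    rw [hLdef]
    have : (Matrix.of fun i j : Fin n => φ j (Function.update ν k t i))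
        = Function.update R k (fun j => φ j t) := by
      funext i j
      rcases eq_or_ne i k with rfl | hik
      · simp [hR]
      · simp [Function.update_of_ne hik, hR]
    rw [Dmat, this]
    rfl
  rw [h1]
  have h2 : (fun j => φ j t) = ∑ j : Fin n, φ j t • (fun j' => if j = j' then (1:ℝ) else 0) := by
    exact pi_eq_sum_univ _
  rw [h2, map_sum]
  simp only [map_smul]
  rw [poly]
  apply Finset.sum_congr rfl
  intro j _
  rw [smul_eq_mul, mul_comm]

/-! (a) implies (c) -/

lemma dets_ne_zero_of_TZ (q n : ℕ) (hn1 : 1 ≤ n) (φ : Fin n → ℕ → ℝ) (hA : IsTZ q n φ) :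
    ∀ ν : Fin n → ℕ, StrictMono ν → (∀ i, ν i ≤ q) → Dmat φ ν ≠ 0 := by
  intro ν hmono hq h
  obtain ⟨a, ha, hz⟩ := exists_poly_zeros_of_det_eq_zero φ ν h
  have hn : n ≤ N q (poly n φ a) :=
    le_N_of_zeros hmono.injective (fun i => Or.inl ⟨hq i, hz i⟩)
  have := hA a ha
  omega

lemma adj_pos_of_TZ (q n : ℕ) (hn1 : 1 ≤ n) (φ : Fin n → ℕ → ℝ) (hA : IsTZ q n φ) :
    ∀ (ν : Fin n → ℕ) (k : Fin n), StrictMono ν → (∀ i, ν i ≤ q) →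
      StrictMono (Function.update ν k (ν k + 1)) →
      (∀ i, Function.update ν k (ν k + 1) i ≤ q) →
      0 < Dmat φ ν * Dmat φ (Function.update ν k (ν k + 1)) := by
  intro ν k hmono hq hmono' hq'
  have hNZ := dets_ne_zero_of_TZ q n hn1 φ hA
  obtain ⟨a, hD⟩ := exists_coeff_det n φ ν k
  have pK : poly n φ a (ν k) = Dmat φ ν := by
    rw [← hD (ν k), Function.update_eq_self]
  have pK' : poly n φ a (ν k + 1) = Dmat φ (Function.update ν k (ν k + 1)) :=
    (hD (ν k + 1)).symm
  have pzero : ∀ i : Fin n, i ≠ k → poly n φ a (ν i) = 0 := by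
    intro i hik
    rw [← hD (ν i), Dmat]
    apply Matrix.det_zero_of_row_eq hik
    funext j
    simp [Function.update_of_ne hik, Function.update_self]
  have hane : a ≠ 0 := by
    intro h0
    apply hNZ ν hmono hq
    rw [← pK, h0, poly_zero]
  by_contra hcon
  have hle : Dmat φ ν * Dmat φ (Function.update ν k (ν k + 1)) ≤ 0 := not_lt.mp hcon
  have hlt : Dmat φ ν * Dmat φ (Function.update ν k (ν k + 1)) < 0 :=
    lt_of_le_of_ne hle (mul_ne_zero (hNZ ν hmono hq) (hNZ _ hmono' hq'))
  have hne2 : ∀ j : Fin n, j ≠ k → ν k + 1 ≠ ν j := by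
    intro j hjk
    rcases lt_or_gt_of_ne hjk with h | h
    · have := hmono h
      omega
    · have h2 : Function.update ν k (ν k + 1) k < Function.update ν k (ν k + 1) j :=
        hmono' h
      rw [Function.update_self, Function.update_of_ne (ne_of_lt h).symm] at h2
      omega
  set z : Fin n → ℕ := fun i => if i = k then ν k + 1 else ν i with hz
  have hzk : z k = ν k + 1 := by simp [hz]
  have hzne : ∀ i, i ≠ k → z i = ν i := fun i hi => by simp [hz, hi]
  have hinj : Function.Injective z := by
    intro i j hij
    by_contra hne
    rcases eq_or_ne i k with rfl | hik
    · have hjk : j ≠ i := fun h => hne h.symm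
      rw [hzk, hzne j hjk] at hij
      exact hne2 j hjk hij
    · rcases eq_or_ne j k with rfl | hjk
      · rw [hzk, hzne i hik] at hij
        exact hne2 i hik hij.symm
      · rw [hzne i hik, hzne j hjk] at hij
        exact hne (hmono.injective hij)
  have hzero : ∀ i, IsZero q (poly n φ a) (z i) := by
    intro i
    rcases eq_or_ne i k with rfl | hik
    · right
      rw [hzk]
      refine ⟨by omega, ?_, ?_⟩
      · have := hq' i; rwa [Function.update_self] at this
      · simp only [Nat.add_sub_cancel]
        rw [pK, pK']
        exact hlt
    · left
      rw [hzne i hik]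
      exact ⟨hq i, pzero i hik⟩
  have h1 := le_N_of_zeros hinj hzero
  have h2 := hA a hane
  omega

theorem A_to_C (q n : ℕ) (hn1 : 1 ≤ n) (hnq : n ≤ q) (φ : Fin n → ℕ → ℝ) (hA : IsTZ q n φ) :
    DetsSameSign q n φ :=
  detsSameSign_of_adj q n hn1 hnq φ (dets_ne_zero_of_TZ q n hn1 φ hA)
    (adj_pos_of_TZ q n hn1 φ hA)


/-! (c) implies (a) -/

lemma zerosSet_finite (q : ℕ) (p : ℕ → ℝ) : {x : ℕ | IsZero q p x}.Finite := by
  apply (Set.finite_Iic q).subset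
  rintro x (⟨h1, -⟩ | ⟨-, h1, -⟩) <;> exact h1

theorem C_to_A (q n : ℕ) (hn1 : 1 ≤ n) (hnq : n ≤ q) (φ : Fin n → ℕ → ℝ)
    (hC : DetsSameSign q n φ) : IsTZ q n φ := by
  classical
  obtain ⟨ε, hεpm, hdet⟩ := hC
  have hdet' : ∀ ν : Fin n → ℕ, StrictMono ν → (∀ i, ν i ≤ q) → 0 < ε * Dmat φ ν :=
    fun ν h1 h2 => hdet ν h1 h2
  intro a ha
  by_contra hcon
  have hN : n ≤ N q (poly n φ a) := by omega
  set p := poly n φ a with hp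
  -- extract n zeros
  have hfin := zerosSet_finite q p
  have hcard : hfin.toFinset.card = N q p := by
    rw [N, Set.ncard_eq_toFinset_card _ hfin]
  obtain ⟨t, hts, htc⟩ := Finset.exists_subset_card_eq (s := hfin.toFinset) (n := n)
    (by omega)
  set μ : Fin n → ℕ := fun i => t.orderEmbOfFin htc i with hμdef
  have hμmono : StrictMono μ := (t.orderEmbOfFin htc).strictMono
  have hμzero : ∀ i, IsZero q p (μ i) := by
    intro i
    have : μ i ∈ t := Finset.orderEmbOfFin_mem t htc i
    have := hts this
    rwa [Set.Finite.mem_toFinset] at this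
  have hμq : ∀ i, μ i ≤ q := by
    intro i
    rcases hμzero i with ⟨h1, -⟩ | ⟨-, h1, -⟩ <;> exact h1
  -- blending coefficients
  set lam : Fin n → ℝ := fun i =>
    if p (μ i) = 0 then 0 else p (μ i) / (p (μ i) - p (μ i - 1)) with hlam
  have hfacts : ∀ i, 0 ≤ lam i ∧ lam i < 1 ∧
      lam i * p (μ i - 1) + (1 - lam i) * p (μ i) = 0 := by
    intro i
    by_cases hy : p (μ i) = 0
    · simp [hlam, hy]
    · have hxy : p (μ i - 1) * p (μ i) < 0 := by
        rcases hμzero i with ⟨-, h1⟩ | ⟨-, -, h1⟩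
        · exact absurd h1 hy
        · exact h1
      set x := p (μ i - 1)
      set y := p (μ i)
      have hd : y - x ≠ 0 := by
        intro h
        have : y = x := by linarith
        rw [this] at hxy
        nlinarith
      have hlami : lam i = y / (y - x) := by rw [hlam]; exact if_neg hy
      have hyd : 0 < y * (y - x) := by nlinarith [sq_nonneg y, hxy]
      have hxd : x * (y - x) < 0 := by nlinarith [sq_nonneg x, hxy]
      refine ⟨?_, ?_, ?_⟩
      · rw [hlami]
        rcases mul_pos_iff.mp hyd with ⟨h1, h2⟩ | ⟨h1, h2⟩
        · positivity
        · exact le_of_lt (div_pos_of_neg_of_neg h1 h2)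
      · rw [hlami]
        have : y / (y - x) - 1 = x / (y - x) := by field_simp; ring
        have h2 : x / (y - x) < 0 := by
          rcases mul_neg_iff.mp hxd with ⟨h1, h2⟩ | ⟨h1, h2⟩
          · exact div_neg_of_pos_of_neg h1 h2
          · exact div_neg_of_neg_of_pos h1 h2
        linarith
      · rw [hlami]
        field_simp
        ring
  -- the blended matrix
  set u : Fin n → (Fin n → ℝ) := fun i => fun j => lam i * φ j (μ i - 1) with hu
  set v : Fin n → (Fin n → ℝ) := fun i => fun j => (1 - lam i) * φ j (μ i) with hv
  set M : Matrix (Fin n) (Fin n) ℝ := Matrix.of (fun i j => u i j + v i j) with hM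
  have hMa : M.mulVec a = 0 := by
    funext i
    have hsum : (M.mulVec a) i
        = lam i * (∑ j, a j * φ j (μ i - 1)) + (1 - lam i) * (∑ j, a j * φ j (μ i)) := by
      simp only [Matrix.mulVec, dotProduct, hM, Matrix.of_apply, hu, hv,
        Finset.mul_sum]
      rw [← Finset.sum_add_distrib]
      apply Finset.sum_congr rfl
      intro j _
      ring
    have := (hfacts i).2.2
    rw [hsum]
    show lam i * poly n φ a (μ i - 1) + (1 - lam i) * poly n φ a (μ i) = 0
    exact this
  have hdet0 : M.det = 0 := Matrix.exists_mulVec_eq_zero_iff.mp ⟨a, ha, hMa⟩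
  -- expansion of the determinant
  set F := (Matrix.detRowAlternating : ((Fin n → ℝ) [⋀^Fin n]→ₗ[ℝ] ℝ)).toMultilinearMap with hF
  have hexp : M.det = ∑ s : Finset (Fin n), F (s.piecewise u v) := by
    have h1 : M.det = F (u + v) := rfl
    rw [h1, F.map_add_univ]
  have hterm : ∀ s : Finset (Fin n),
      F (s.piecewise u v) = (∏ i, (if i ∈ s then lam i else 1 - lam i)) *
        Dmat φ (fun i => if i ∈ s then μ i - 1 else μ i) := by
    intro s
    have h2 : s.piecewise u v = fun i => (if i ∈ s then lam i else 1 - lam i) •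
        (fun j => φ j (if i ∈ s then μ i - 1 else μ i)) := by
      funext i j
      by_cases his : i ∈ s
      · simp [Finset.piecewise, his, hu, Pi.smul_apply, smul_eq_mul]
      · simp [Finset.piecewise, his, hv, Pi.smul_apply, smul_eq_mul]
    rw [h2, F.map_smul_univ]
    rfl
  -- each term is nonnegative after multiplying with ε
  have hnonneg : ∀ s : Finset (Fin n),
      0 ≤ (∏ i, (if i ∈ s then lam i else 1 - lam i)) *
        (ε * Dmat φ (fun i => if i ∈ s then μ i - 1 else μ i)) := by
    intro s
    set w : Fin n → ℕ := fun i => if i ∈ s then μ i - 1 else μ i with hw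
    have hwμ : ∀ i, w i ≤ μ i ∧ μ i - 1 ≤ w i := by
      intro i
      by_cases his : i ∈ s <;> simp [hw, his] <;> omega
    have hwmono : Monotone w := by
      intro i j hij
      rcases eq_or_lt_of_le hij with rfl | hlt
      · exact le_refl _
      · have h1 := (hwμ i).1
        have h2 := (hwμ j).2
        have h3 := hμmono hlt
        omega
    have hprod : 0 ≤ ∏ i, (if i ∈ s then lam i else 1 - lam i) := by
      apply Finset.prod_nonneg
      intro i _
      by_cases his : i ∈ s
      · simp [his]; exact (hfacts i).1
      · simp [his]; linarith [(hfacts i).2.1]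
    by_cases hsm : StrictMono w
    · have hwq : ∀ i, w i ≤ q := fun i => le_trans (hwμ i).1 (hμq i)
      exact mul_nonneg hprod (le_of_lt (hdet' w hsm hwq))
    · have : ∃ i j : Fin n, i < j ∧ w i = w j := by
        by_contra hc
        push_neg at hc
        exact hsm fun i j hij => lt_of_le_of_ne (hwmono (le_of_lt hij)) (hc i j hij)
      obtain ⟨i, j, hij, hwij⟩ := this
      have : Dmat φ w = 0 := by
        apply Matrix.det_zero_of_row_eq (ne_of_lt hij)
        funext j'
        show φ j' (w i) = φ j' (w j)
        rw [hwij]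
      rw [this]
      simp
  -- the empty-set term is positive
  have hpos : 0 < (∏ i, (if i ∈ (∅ : Finset (Fin n)) then lam i else 1 - lam i)) *
      (ε * Dmat φ (fun i => if i ∈ (∅ : Finset (Fin n)) then μ i - 1 else μ i)) := by
    simp only [Finset.notMem_empty, if_false]
    apply mul_pos
    · apply Finset.prod_pos
      intro i _
      linarith [(hfacts i).2.1]
    · exact hdet' μ hμmono hμq
  have hsumpos : 0 < ∑ s : Finset (Fin n),
      (∏ i, (if i ∈ s then lam i else 1 - lam i)) *
        (ε * Dmat φ (fun i => if i ∈ s then μ i - 1 else μ i)) := by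
    apply lt_of_lt_of_le hpos
    apply Finset.single_le_sum (fun s _ => hnonneg s) (Finset.mem_univ _)
  have hzero : (∑ s : Finset (Fin n),
      (∏ i, (if i ∈ s then lam i else 1 - lam i)) *
        (ε * Dmat φ (fun i => if i ∈ s then μ i - 1 else μ i))) = 0 := by
    have h1 : ε * M.det = ∑ s : Finset (Fin n),
        (∏ i, (if i ∈ s then lam i else 1 - lam i)) *
          (ε * Dmat φ (fun i => if i ∈ s then μ i - 1 else μ i)) := by
      rw [hexp, Finset.mul_sum]
      apply Finset.sum_congr rfl
      intro s _
      rw [hterm s]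
      ring
    rw [← h1, hdet0, mul_zero]
  rw [hzero] at hsumpos
  exact lt_irrefl _ hsumpos


/-! the dual certificate: a sign measure supported on nodes makes 0 a best approximant -/

noncomputable def mySgn (c : ℝ) : ℝ := if 0 < c then 1 else -1

lemma mySgn_pm (c : ℝ) : mySgn c = 1 ∨ mySgn c = -1 := by
  unfold mySgn; split <;> simp

lemma abs_mySgn (c : ℝ) : |mySgn c| = 1 := by
  rcases mySgn_pm c with h | h <;> rw [h] <;> simp

lemma mul_mySgn (c : ℝ) : c * mySgn c = |c| := by
  unfold mySgn
  split
  · rw [mul_one, abs_of_pos (by assumption)]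
  · rw [mul_neg_one, abs_of_nonpos (not_lt.mp (by assumption))]

lemma best_zero {q n m : ℕ} (φ : Fin n → ℕ → ℝ) (y : Fin m → ℕ)
    (hinj : Function.Injective y) (hyq : ∀ i, y i ≤ q) (c : Fin m → ℝ)
    (hdep : ∀ j : Fin n, ∑ i, c i * φ j (y i) = 0) (hcne : ∃ i, c i ≠ 0) :
    IsBestApprox q n φ (fun x => ∑ i, if y i = x then mySgn (c i) else 0) 0 ∧
    normZ q (fun x => ∑ i, if y i = x then mySgn (c i) else 0) = 1 ∧
    (∀ x : ℕ, (∑ i, if y i = x then mySgn (c i) else 0) ≠ 0 → ∃ i, y i = x) ∧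
    (∀ i : Fin m, (∑ i', if y i' = y i then mySgn (c i')  else 0) = mySgn (c i)) := by
  classical
  set f : ℕ → ℝ := fun x => ∑ i, if y i = x then mySgn (c i) else 0 with hf
  have hfy : ∀ i, f (y i) = mySgn (c i) := by
    intro i
    show (∑ i', if y i' = y i then mySgn (c i') else 0) = mySgn (c i)
    rw [Finset.sum_eq_single i (fun b _ hbi => if_neg (fun h => hbi (hinj h)))
      (fun h => absurd (Finset.mem_univ i) h)]
    simp
  have hsupp : ∀ x : ℕ, f x ≠ 0 → ∃ i, y i = x := by
    intro x hx
    by_contra hc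
    push_neg at hc
    apply hx
    rw [hf]
    apply Finset.sum_eq_zero
    intro i _
    exact if_neg (hc i)
  have hfle : ∀ x, |f x| ≤ 1 := by
    intro x
    by_cases hx : f x = 0
    · rw [hx]; simp
    · obtain ⟨i, hi⟩ := hsupp x hx
      have : f x = mySgn (c i) := by
        rw [← hi, hfy]
      rw [this, abs_mySgn]
  obtain ⟨i0, hi0⟩ := hcne
  have hnorm1 : normZ q f = 1 := by
    apply le_antisymm
    · exact (normZ_le_iff q f).mpr (fun x _ => hfle x)
    · have h1 : |f (y i0)| ≤ normZ q f := abs_le_normZ q f (hyq i0)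
      rw [hfy, abs_mySgn] at h1
      exact h1
  refine ⟨?_, hnorm1, hsupp, fun i => hfy i⟩
  intro b
  have hLHS : normZ q (fun x => f x - poly n φ 0 x) = 1 := by
    rw [← hnorm1]
    apply normZ_congr_abs
    intro x _
    rw [poly_zero, sub_zero]
  rw [hLHS]
  set g : ℕ → ℝ := fun x => f x - poly n φ b x with hg
  set R := normZ q g with hR
  set W := ∑ i, |c i| with hW
  have hWpos : 0 < W := by
    rw [hW]
    apply Finset.sum_pos' (fun i _ => abs_nonneg _)
    exact ⟨i0, Finset.mem_univ i0, abs_pos.mpr hi0⟩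
  have hkey : ∑ i, c i * g (y i) = W := by
    rw [hg]
    have : ∀ i : Fin m, c i * (f (y i) - poly n φ b (y i))
        = c i * mySgn (c i) - c i * poly n φ b (y i) := by
      intro i; rw [hfy]; ring
    rw [Finset.sum_congr rfl (fun i _ => this i), Finset.sum_sub_distrib]
    have h2 : ∑ i, c i * poly n φ b (y i) = 0 := by
      simp only [poly, Finset.mul_sum]
      rw [Finset.sum_comm]
      apply Finset.sum_eq_zero
      intro k _
      have := hdep k
      calc ∑ i, c i * (b k * φ k (y i)) = b k * ∑ i, c i * φ k (y i) := by
            rw [Finset.mul_sum]; apply Finset.sum_congr rfl; intro i _; ring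
        _ = 0 := by rw [this, mul_zero]
    rw [h2, sub_zero, hW]
    apply Finset.sum_congr rfl
    intro i _
    exact mul_mySgn (c i)
  have hbound : W ≤ W * R := by
    calc W = ∑ i, c i * g (y i) := hkey.symm
      _ ≤ ∑ i, |c i * g (y i)| := Finset.sum_le_sum (fun i _ => le_abs_self _)
      _ = ∑ i, |c i| * |g (y i)| := by
          apply Finset.sum_congr rfl; intro i _; exact abs_mul _ _
      _ ≤ ∑ i, |c i| * R := by
          apply Finset.sum_le_sum
          intro i _
          exact mul_le_mul_of_nonneg_left (abs_le_normZ q g (hyq i)) (abs_nonneg _)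
      _ = W * R := by rw [hW, Finset.sum_mul]
  have : 1 ≤ R := by
    by_contra hcl
    push_neg at hcl
    have := mul_lt_mul_of_pos_left hcl hWpos
    rw [mul_one] at this
    exact absurd hbound (not_le.mpr this)
  exact this


lemma mySgn_eq_of_mul_pos {x y : ℝ} (h : 0 < x * y) : mySgn x = mySgn y := by
  unfold mySgn
  rcases mul_pos_iff.mp h with ⟨h1, h2⟩ | ⟨h1, h2⟩
  · rw [if_pos h1, if_pos h2]
  · rw [if_neg (not_lt.mpr (le_of_lt h1)), if_neg (not_lt.mpr (le_of_lt h2))]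

/-- from an alternance for the zero approximant we extract the value of f at the nodes -/
lemma alt_value {q n : ℕ} (φ : Fin n → ℕ → ℝ) (f : ℕ → ℝ)
    (hnorm : normZ q f = 1)
    (ν' : Fin (n + 1) → ℕ) (ε : ℝ) (hεpm : ε = 1 ∨ ε = -1)
    (halt : ∀ i : Fin (n + 1),
      ε * (-1) ^ (i : ℕ) * (poly n φ 0 (ν' i) - f (ν' i)) =
        normZ q (fun μ => poly n φ 0 μ - f μ)) :
    ∀ i : Fin (n + 1), f (ν' i) = -(ε * (-1) ^ (i : ℕ)) := by
  intro i
  have hRHS : normZ q (fun μ => poly n φ 0 μ - f μ) = 1 := by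
    rw [← hnorm]
    apply normZ_congr_abs
    intro x _
    rw [poly_zero, zero_sub, abs_neg]
  have h := halt i
  rw [hRHS, poly_zero] at h
  set A := ε * (-1 : ℝ) ^ (i : ℕ) with hA
  have h2 : A * A = 1 := by
    rw [hA]
    have hε2 : ε * ε = 1 := by rcases hεpm with rfl | rfl <;> norm_num
    have hp2 : ((-1 : ℝ)) ^ (i : ℕ) * ((-1 : ℝ)) ^ (i : ℕ) = 1 := by
      rw [← mul_pow]
      norm_num
    calc ε * (-1:ℝ) ^ (i:ℕ) * (ε * (-1:ℝ) ^ (i:ℕ))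
        = (ε * ε) * ((-1:ℝ)^(i:ℕ) * (-1:ℝ)^(i:ℕ)) := by ring
      _ = 1 := by rw [hε2, hp2, one_mul]
  have h3 : A * (A * (0 - f (ν' i))) = A * 1 := by rw [h]
  rw [← mul_assoc, h2, one_mul, mul_one] at h3
  linarith

theorem B_to_C (q n : ℕ) (hn1 : 1 ≤ n) (hnq : n ≤ q) (φ : Fin n → ℕ → ℝ)
    (hB : ∀ (f : ℕ → ℝ) (a : Fin n → ℝ),
      IsBestApprox q n φ f a → HasAlternance q n φ f a) :
    DetsSameSign q n φ := by
  classical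
  by_cases hNZ : ∀ ν : Fin n → ℕ, StrictMono ν → (∀ i, ν i ≤ q) → Dmat φ ν ≠ 0
  case neg =>
    -- some determinant vanishes: rows are dependent on at most n nodes
    push_neg at hNZ
    obtain ⟨ν, hmono, hq, hdet0⟩ := hNZ
    set M : Matrix (Fin n) (Fin n) ℝ := Matrix.of (fun i j : Fin n => φ j (ν i)) with hM
    have hdetT : M.transpose.det = 0 := by rw [Matrix.det_transpose]; exact hdet0
    obtain ⟨c, hcne, hMc⟩ := Matrix.exists_mulVec_eq_zero_iff.mpr hdetT
    have hdep : ∀ j : Fin n, ∑ i, c i * φ j (ν i) = 0 := by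
      intro j
      have := congrFun hMc j
      simpa [Matrix.mulVec, dotProduct, Matrix.transpose, hM, mul_comm] using this
    have hcex : ∃ i, c i ≠ 0 := by
      by_contra hc
      push_neg at hc
      exact hcne (funext hc)
    obtain ⟨hbest, hnorm, hsupp, hfy⟩ :=
      best_zero φ ν hmono.injective hq c hdep hcex
    obtain ⟨ν', hm', hq', ε, hεpm, halt⟩ := hB _ 0 hbest
    have hval := alt_value φ _ hnorm ν' ε hεpm halt
    have hmem : ∀ i : Fin (n + 1), ν' i ∈ Finset.image ν Finset.univ := by
      intro i
      have h1 : (∑ i', if ν i' = ν' i then mySgn (c i') else 0) ≠ 0 := by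
        rw [hval i]
        intro hcontra
        have : ε * (-1:ℝ) ^ (i:ℕ) = 0 := by linarith
        rcases hεpm with rfl | rfl
        · simp at this
        · simp at this
      obtain ⟨i', hi'⟩ := hsupp (ν' i) h1
      rw [Finset.mem_image]
      exact ⟨i', Finset.mem_univ i', hi'⟩
    have hcard : (n + 1 : ℕ) ≤ n := by
      have h1 : (Finset.univ : Finset (Fin (n+1))).card ≤ (Finset.image ν Finset.univ).card :=
        Finset.card_le_card_of_injOn ν' (fun i _ => hmem i)
          (fun i _ j _ hij => hm'.injective hij)
      have h2 : (Finset.image ν Finset.univ).card ≤ n := by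
        apply le_trans (Finset.card_image_le)
        simp
      simpa using le_trans h1 h2
    omega
  case pos =>
    apply detsSameSign_of_adj q n hn1 hnq φ hNZ
    intro ν k hmono hq hmono' hq'
    by_contra hcon
    set ν2 := Function.update ν k (ν k + 1) with hν2
    have hlt : Dmat φ ν * Dmat φ ν2 < 0 :=
      lt_of_le_of_ne (not_lt.mp hcon) (mul_ne_zero (hNZ ν hmono hq) (hNZ ν2 hmono' hq'))
    -- insert the point ν k + 1 after position k
    set y : Fin (n + 1) → ℕ := fun i =>
      if h : (i : ℕ) ≤ (k : ℕ) then ν ⟨(i : ℕ), lt_of_le_of_lt h k.isLt⟩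
      else if h2 : (i : ℕ) = (k : ℕ) + 1 then ν k + 1
      else ν ⟨(i : ℕ) - 1, by omega⟩ with hy
    have hyval1 : ∀ r : Fin n, (r : ℕ) ≤ (k : ℕ) → ∀ (i : Fin (n+1)), (i : ℕ) = (r : ℕ) →
        y i = ν r := by
      intro r hr i hi
      rw [hy]
      simp only
      rw [dif_pos (by omega)]
      congr 1
      exact Fin.ext (by simp [hi])
    have hyval2 : ∀ (i : Fin (n+1)), (i : ℕ) = (k : ℕ) + 1 → y i = ν k + 1 := by
      intro i hi
      rw [hy]
      simp only
      rw [dif_neg (by omega), dif_pos hi]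
    have hyval3 : ∀ r : Fin n, (k : ℕ) < (r : ℕ) → ∀ (i : Fin (n+1)), (i : ℕ) = (r : ℕ) + 1 →
        y i = ν r := by
      intro r hr i hi
      rw [hy]
      simp only
      rw [dif_neg (by omega), dif_neg (by omega)]
      congr 1
      exact Fin.ext (by simp [hi])
    have hν2k : ν2 k = ν k + 1 := Function.update_self _ _ _
    have hν2ne : ∀ i : Fin n, i ≠ k → ν2 i = ν i := fun i hi => Function.update_of_ne hi _ _
    have hymono : StrictMono y := by
      intro i j hij
      have hij' : (i : ℕ) < (j : ℕ) := hij
      by_cases hi1 : (i : ℕ) ≤ (k : ℕ)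
      · have hyi : y i = ν ⟨(i : ℕ), lt_of_le_of_lt hi1 k.isLt⟩ :=
          hyval1 ⟨(i : ℕ), lt_of_le_of_lt hi1 k.isLt⟩ (by simpa using hi1) i rfl
        by_cases hj1 : (j : ℕ) ≤ (k : ℕ)
        · rw [hyi, hyval1 ⟨(j : ℕ), lt_of_le_of_lt hj1 k.isLt⟩ (by simpa using hj1) j rfl]
          exact hmono (by rw [Fin.lt_def]; exact hij')
        · by_cases hj2 : (j : ℕ) = (k : ℕ) + 1
          · rw [hyi, hyval2 j hj2]
            have : ν ⟨(i : ℕ), lt_of_le_of_lt hi1 k.isLt⟩ ≤ ν k :=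
              hmono.monotone (by rw [Fin.le_def]; exact hi1)
            omega
          · have hjr : (k : ℕ) < (j : ℕ) - 1 := by omega
            have hjlt : (j : ℕ) - 1 < n := by omega
            rw [hyi, hyval3 ⟨(j : ℕ) - 1, hjlt⟩ (by simpa using hjr) j (by simp; omega)]
            exact hmono (by simp [Fin.lt_def]; omega)
      · by_cases hi2 : (i : ℕ) = (k : ℕ) + 1
        · rw [hyval2 i hi2]
          have hjr : (k : ℕ) < (j : ℕ) - 1 := by omega
          have hjlt : (j : ℕ) - 1 < n := by omega
          rw [hyval3 ⟨(j : ℕ) - 1, hjlt⟩ (by simpa using hjr) j (by simp; omega)]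
          have h2 : ν2 k < ν2 ⟨(j : ℕ) - 1, hjlt⟩ := hmono' (by simp [Fin.lt_def]; omega)
          rw [hν2k, hν2ne _ (by intro hcc; apply absurd (congrArg Fin.val hcc); simp; omega)] at h2
          exact h2
        · have hir : (k : ℕ) < (i : ℕ) - 1 := by omega
          have hilt : (i : ℕ) - 1 < n := by omega
          have hjr : (k : ℕ) < (j : ℕ) - 1 := by omega
          have hjlt : (j : ℕ) - 1 < n := by omega
          rw [hyval3 ⟨(i : ℕ) - 1, hilt⟩ (by simpa using hir) i (by simp; omega),
            hyval3 ⟨(j : ℕ) - 1, hjlt⟩ (by simpa using hjr) j (by simp; omega)]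
          exact hmono (by simp [Fin.lt_def]; omega)
    have hyq : ∀ i, y i ≤ q := by
      intro i
      by_cases hi1 : (i : ℕ) ≤ (k : ℕ)
      · rw [hyval1 ⟨(i : ℕ), lt_of_le_of_lt hi1 k.isLt⟩ (by simpa using hi1) i rfl]
        exact hq _
      · by_cases hi2 : (i : ℕ) = (k : ℕ) + 1
        · rw [hyval2 i hi2]
          have := hq' k
          rwa [hν2k] at this
        · have hir : (k : ℕ) < (i : ℕ) - 1 := by omega
          have hilt : (i : ℕ) - 1 < n := by omega
          rw [hyval3 ⟨(i : ℕ) - 1, hilt⟩ (by simpa using hir) i (by simp; omega)]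
          exact hq _
    -- the Cramer coefficients
    set c : Fin (n + 1) → ℝ := fun i =>
      (-1 : ℝ) ^ (i : ℕ) * Dmat φ (fun r => y (Fin.succAbove i r)) with hc
    have hdep : ∀ j : Fin n, ∑ i, c i * φ j (y i) = 0 := by
      intro j
      have := cramer_dep (fun i => fun j' => φ j' (y i)) j
      simpa [hc, Dmat] using this
    have hminor : ∀ i : Fin (n + 1), StrictMono (fun r => y (Fin.succAbove i r)) ∧
        (∀ r, y (Fin.succAbove i r) ≤ q) :=
      fun i => ⟨hymono.comp (Fin.strictMono_succAbove i), fun r => hyq _⟩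
    have hcnz : ∀ i, c i ≠ 0 := by
      intro i
      rw [hc]
      exact mul_ne_zero (pow_ne_zero _ (by norm_num))
        (hNZ _ (hminor i).1 (hminor i).2)
    -- adjacent equal signs at positions k and k+1
    have hsucc1 : (fun r => y (Fin.succAbove (Fin.succ k) r)) = ν := by
      funext r
      by_cases hr : (r : ℕ) ≤ (k : ℕ)
      · have h1 : (Fin.succAbove (Fin.succ k) r : ℕ) = (r : ℕ) := by
          rw [Fin.succAbove]
          rw [if_pos (by simp [Fin.lt_def]; omega)]
          simp
        exact hyval1 r hr _ h1
      · have h1 : (Fin.succAbove (Fin.succ k) r : ℕ) = (r : ℕ) + 1 := by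
          rw [Fin.succAbove]
          rw [if_neg (by rw [Fin.lt_def]; simp only [Fin.coe_castSucc, Fin.val_succ]; omega)]
          simp
        exact hyval3 r (by omega) _ h1
    have hsucc2 : (fun r => y (Fin.succAbove (Fin.castSucc k) r)) = ν2 := by
      funext r
      by_cases hr : (r : ℕ) < (k : ℕ)
      · have h1 : (Fin.succAbove (Fin.castSucc k) r : ℕ) = (r : ℕ) := by
          rw [Fin.succAbove]
          rw [if_pos (by rw [Fin.lt_def]; simp only [Fin.coe_castSucc]; omega)]
          simp
        rw [hyval1 r (by omega) _ h1, hν2ne r (by intro hcc; apply absurd (congrArg Fin.val hcc); omega)]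
      · have h1 : (Fin.succAbove (Fin.castSucc k) r : ℕ) = (r : ℕ) + 1 := by
          rw [Fin.succAbove]
          rw [if_neg (by rw [Fin.lt_def]; simp only [Fin.coe_castSucc]; omega)]
          simp
        by_cases hrk : (r : ℕ) = (k : ℕ)
        · have hrk' : r = k := Fin.ext hrk
          rw [hyval2 _ (by omega), hrk', hν2k]
        · rw [hyval3 r (by omega) _ h1, hν2ne r (fun hcc => hrk (congrArg Fin.val hcc))]
    have hprodpos : 0 < c (Fin.castSucc k) * c (Fin.succ k) := by
      rw [hc]
      simp only
      rw [hsucc1, hsucc2]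
      have h1 : ((Fin.castSucc k : Fin (n+1)) : ℕ) = (k : ℕ) := by simp
      have h2 : ((Fin.succ k : Fin (n+1)) : ℕ) = (k : ℕ) + 1 := by simp
      rw [h1, h2]
      have : (-1:ℝ) ^ (k:ℕ) * Dmat φ ν2 * ((-1:ℝ) ^ ((k:ℕ)+1) * Dmat φ ν)
          = -(Dmat φ ν * Dmat φ ν2) * ((-1:ℝ) ^ (k:ℕ) * (-1:ℝ)^(k:ℕ)) := by ring
      rw [this, ← mul_pow]
      norm_num
      linarith
    -- now build f and get the contradiction
    have hcex : ∃ i, c i ≠ 0 := ⟨Fin.succ k, hcnz _⟩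
    obtain ⟨hbest, hnorm, hsupp, hfy⟩ :=
      best_zero φ y hymono.injective hyq c hdep hcex
    obtain ⟨ν', hm', hq'2, ε, hεpm, halt⟩ := hB _ 0 hbest
    have hval := alt_value φ _ hnorm ν' ε hεpm halt
    -- ν' must coincide with y
    set s : Finset ℕ := Finset.image y Finset.univ with hs
    have hscard : s.card = n + 1 := by
      rw [hs, Finset.card_image_of_injective _ hymono.injective]
      simp
    have hmem : ∀ i : Fin (n + 1), ν' i ∈ s := by
      intro i
      have h1 : (∑ i', if y i' = ν' i then mySgn (c i') else 0) ≠ 0 := by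
        rw [hval i]
        intro hcontra
        have h2 : ε * (-1:ℝ) ^ (i:ℕ) = 0 := by linarith
        rcases hεpm with rfl | rfl
        · simp at h2
        · simp at h2
      obtain ⟨i', hi'⟩ := hsupp (ν' i) h1
      rw [hs, Finset.mem_image]
      exact ⟨i', Finset.mem_univ i', hi'⟩
    have hν'y : ν' = y := by
      have e1 : ν' = ⇑(s.orderEmbOfFin hscard) :=
        Finset.orderEmbOfFin_unique hscard hmem hm'
      have e2 : y = ⇑(s.orderEmbOfFin hscard) :=
        Finset.orderEmbOfFin_unique hscard
          (fun i => by rw [hs, Finset.mem_image]; exact ⟨i, Finset.mem_univ i, rfl⟩) hymono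
      rw [e1, e2]
    -- signs alternate along y, contradicting equal adjacent signs
    have hsgn : ∀ i : Fin (n + 1), mySgn (c i) = -(ε * (-1 : ℝ) ^ (i : ℕ)) := by
      intro i
      rw [← hfy i]
      show (fun x => ∑ i', if y i' = x then mySgn (c i') else 0) (y i) = _
      rw [← congrFun hν'y i]
      exact hval i
    have heq := mySgn_eq_of_mul_pos hprodpos
    rw [hsgn, hsgn] at heq
    have h1 : ((Fin.castSucc k : Fin (n+1)) : ℕ) = (k : ℕ) := by simp
    have h2 : ((Fin.succ k : Fin (n+1)) : ℕ) = (k : ℕ) + 1 := by simp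
    rw [h1, h2] at heq
    have h3 : (-1:ℝ) ^ ((k:ℕ)+1) = -((-1:ℝ)^(k:ℕ)) := by
      rw [pow_succ]; ring
    rw [h3] at heq
    have h4 : ε * (-1:ℝ)^(k:ℕ) ≠ 0 := by
      apply mul_ne_zero
      · rcases hεpm with rfl | rfl <;> norm_num
      · exact pow_ne_zero _ (by norm_num)
    apply h4
    linarith


theorem C_to_B (q n : ℕ) (hn1 : 1 ≤ n) (hnq : n ≤ q) (φ : Fin n → ℕ → ℝ)
    (hC : DetsSameSign q n φ) (f : ℕ → ℝ) (a : Fin n → ℝ)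
    (hbest : IsBestApprox q n φ f a) : HasAlternance q n φ f a := by
  classical
  obtain ⟨ε, hεpm, hdetsign⟩ := hC
  have hdet' : ∀ ν : Fin n → ℕ, StrictMono ν → (∀ i, ν i ≤ q) → 0 < ε * Dmat φ ν :=
    fun ν h1 h2 => hdetsign ν h1 h2
  have hNZ : ∀ ν : Fin n → ℕ, StrictMono ν → (∀ i, ν i ≤ q) → Dmat φ ν ≠ 0 := by
    intro ν h1 h2 h
    have := hdet' ν h1 h2
    rw [h, mul_zero] at this
    exact lt_irrefl _ this
  have hεne : ε ≠ 0 := by rcases hεpm with rfl | rfl <;> norm_num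
  unfold HasAlternance
  unfold IsBestApprox at hbest
  set r : ℕ → ℝ := fun μ => poly n φ a μ - f μ with hr
  set E := normZ q r with hE
  by_cases hE0 : E = 0
  · -- zero error : any nodes give an alternance
    refine ⟨fun i => (i : ℕ), fun i j hij => hij,
      fun i => by show (i : ℕ) ≤ q; have := i.isLt; omega,
      1, Or.inl rfl, fun i => ?_⟩
    have hx : |r (i : ℕ)| ≤ E := abs_le_normZ q r (by have := i.isLt; omega)
    rw [hE0] at hx
    have hx0 : r (i : ℕ) = 0 := by
      have := abs_nonneg (r (i : ℕ)); have := abs_eq_zero.mp (le_antisymm hx this)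
      assumption
    show 1 * (-1 : ℝ) ^ (i : ℕ) * r (i : ℕ) = E
    rw [hx0, hE0]
    ring
  · have hEpos : 0 < E := lt_of_le_of_ne (normZ_nonneg q r) (Ne.symm hE0)
    set ExtF : Finset ℕ := (Finset.range (q + 1)).filter (fun e => |r e| = E) with hExtF
    have hExt_ne : ExtF.Nonempty := by
      obtain ⟨x, hx, hxE⟩ := exists_normZ_eq q r
      exact ⟨x, Finset.mem_filter.mpr ⟨Finset.mem_range.mpr (by omega), hxE.symm⟩⟩
    have hExtq : ∀ e ∈ ExtF, e ≤ q := by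
      intro e he
      have := (Finset.mem_filter.mp he).1
      rw [Finset.mem_range] at this
      omega
    have hExtE : ∀ e ∈ ExtF, |r e| = E := fun e he => (Finset.mem_filter.mp he).2
    set σ : ℕ → ℝ := fun e => mySgn (r e) with hσ
    have hσpm : ∀ e, σ e = 1 ∨ σ e = -1 := fun e => mySgn_pm _
    have hσr : ∀ e ∈ ExtF, r e = σ e * E := by
      intro e he
      have h1 := hExtE e he
      show r e = (if 0 < r e then (1:ℝ) else -1) * E
      split
      · rw [one_mul, ← h1, abs_of_pos (by assumption)]
      · rw [neg_one_mul, ← h1, abs_of_nonpos (not_lt.mp (by assumption)), neg_neg]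
    set v : ℕ → (Fin n → ℝ) := fun e => fun j => σ e * φ j e with hv
    set S : Finset (Fin n → ℝ) := ExtF.image v with hS
    set K := convexHull ℝ (S : Set (Fin n → ℝ)) with hK
    by_cases h0K : (0 : Fin n → ℝ) ∈ K
    · -- dual certificate exists : build the alternance
      obtain ⟨ι, hι, z, w, hzs, hai, hwpos, hwsum, hwz⟩ :=
        eq_pos_convex_span_of_mem_convexHull h0K
      have hcard : Fintype.card ι ≤ n + 1 := by
        have h1 := hai.card_le_finrank_succ
        have h2 : Module.finrank ℝ ↥(vectorSpan ℝ (Set.range z)) ≤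
            Module.finrank ℝ (Fin n → ℝ) := Submodule.finrank_le _
        have h3 : Module.finrank ℝ (Fin n → ℝ) = n := by
          rw [Module.finrank_pi]; simp
        omega
      have hz' : ∀ i : ι, z i ∈ ExtF.image v := by
        intro i
        have := hzs (Set.mem_range_self i)
        exact_mod_cast this
      choose e he hve using fun i => Finset.mem_image.mp (hz' i)
      have heinj : Function.Injective e := by
        intro i j hij
        apply hai.injective
        rw [← hve i, ← hve j, hij]
      have heq : ∀ i, e i ≤ q := fun i => hExtq _ (he i)
      have hpair : ∀ j : Fin n, ∑ i, w i * (σ (e i) * φ j (e i)) = 0 := by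
        intro j
        have h1 := congrFun hwz j
        rw [Finset.sum_apply] at h1
        simp only [Pi.smul_apply, smul_eq_mul, Pi.zero_apply] at h1
        rw [← h1]
        apply Finset.sum_congr rfl
        intro i _
        congr 1
        rw [← hve i]
      have hpoly : ∀ hv' : Fin n → ℝ,
          ∑ i, w i * (σ (e i) * poly n φ hv' (e i)) = 0 := by
        intro hv'
        have hterm : ∀ i : ι, w i * (σ (e i) * poly n φ hv' (e i))
            = ∑ j, hv' j * (w i * (σ (e i) * φ j (e i))) := by
          intro i
          rw [poly, Finset.mul_sum, Finset.mul_sum]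
          apply Finset.sum_congr rfl
          intro j _
          ring
        rw [Finset.sum_congr rfl (fun i _ => hterm i), Finset.sum_comm]
        apply Finset.sum_eq_zero
        intro j _
        rw [← Finset.mul_sum, hpair j, mul_zero]
      by_cases hm : Fintype.card ι ≤ n
      · -- impossible : interpolation gives a positive pairing
        exfalso
        set T : Finset ℕ := Finset.image e Finset.univ with hT
        have hTsub : T ⊆ Finset.range (q + 1) := by
          intro x hx
          rw [hT, Finset.mem_image] at hx
          obtain ⟨i, -, rfl⟩ := hx
          exact Finset.mem_range.mpr (Nat.lt_succ_of_le (heq i))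
        have hTcard : T.card ≤ n := by
          have := Finset.card_image_le (f := e) (s := Finset.univ)
          rw [← hT] at this
          simp only [Finset.card_univ] at this
          omega
        obtain ⟨U, hTU, hUsub, hUcard⟩ :=
          Finset.exists_subsuperset_card_eq hTsub hTcard
            (by rw [Finset.card_range]; omega)
        set μ : Fin n → ℕ := fun i => U.orderEmbOfFin hUcard i with hμ
        have hμmono : StrictMono μ := (U.orderEmbOfFin hUcard).strictMono
        have hμq : ∀ i, μ i ≤ q := by
          intro i
          have h1 : μ i ∈ U := Finset.orderEmbOfFin_mem U hUcard i
          have h2 := hUsub h1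
          rw [Finset.mem_range] at h2
          omega
        obtain ⟨hcoef, hh⟩ := exists_interp φ μ (hNZ μ hμmono hμq) (fun i => σ (μ i))
        have hhe : ∀ i : ι, poly n φ hcoef (e i) = σ (e i) := by
          intro i
          have h1 : e i ∈ U := hTU (by
            rw [hT]; exact Finset.mem_image_of_mem e (Finset.mem_univ i))
          have h2 : e i ∈ Set.range μ := by
            rw [hμ]
            show e i ∈ Set.range ⇑(U.orderEmbOfFin hUcard)
            rw [Finset.range_orderEmbOfFin]
            exact_mod_cast h1
          obtain ⟨idx, hidx⟩ := h2
          rw [← hidx, hh idx]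
        have hzero := hpoly hcoef
        have hone : ∀ i : ι, w i * (σ (e i) * poly n φ hcoef (e i)) = w i := by
          intro i
          rw [hhe i]
          rcases hσpm (e i) with hs | hs <;> rw [hs] <;> ring
        rw [Finset.sum_congr rfl (fun i _ => hone i), hwsum] at hzero
        norm_num at hzero
      · -- exactly n + 1 extreme points : the alternance appears
        have hm' : Fintype.card ι = n + 1 := by omega
        set T : Finset ℕ := Finset.image e Finset.univ with hT
        have hTcard : T.card = n + 1 := by
          rw [hT, Finset.card_image_of_injective _ heinj]
          simp [hm']
        set es : Fin (n + 1) → ℕ := fun j => T.orderEmbOfFin hTcard j with hes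
        have hesmono : StrictMono es := (T.orderEmbOfFin hTcard).strictMono
        have hesT : ∀ j, es j ∈ T := fun j => Finset.orderEmbOfFin_mem T hTcard j
        have hπex : ∀ j : Fin (n + 1), ∃ i : ι, e i = es j := by
          intro j
          have h1 := hesT j
          rw [hT, Finset.mem_image] at h1
          obtain ⟨i, -, h2⟩ := h1
          exact ⟨i, h2⟩
        choose π hπ using hπex
        have hesq : ∀ j, es j ≤ q := by
          intro j
          rw [← hπ j]
          exact heq _
        have hesExt : ∀ j, es j ∈ ExtF := by
          intro j
          rw [← hπ j]
          exact he _
        have hπinj : Function.Injective π := by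
          intro j1 j2 h12
          apply hesmono.injective
          rw [← hπ j1, ← hπ j2, h12]
        have hπbij : Function.Bijective π :=
          (Fintype.bijective_iff_injective_and_card π).mpr
            ⟨hπinj, by rw [Fintype.card_fin]; omega⟩
        set c : Fin (n + 1) → ℝ := fun j => w (π j) * σ (es j) with hc
        have hcdep : ∀ j' : Fin n, ∑ j, c j * φ j' (es j) = 0 := by
          intro j'
          have h1 := hpair j'
          have h2 := Fintype.sum_bijective π hπbij
            (fun j => c j * φ j' (es j))
            (fun i => w i * (σ (e i) * φ j' (e i)))
            (by
              intro j
              show c j * φ j' (es j) = w (π j) * (σ (e (π j)) * φ j' (e (π j)))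
              rw [hπ j]
              simp only [hc]
              ring)
          rw [h2, h1]
        set d : Fin (n + 1) → ℝ :=
          fun j => (-1 : ℝ) ^ (j : ℕ) * Dmat φ (fun t' => es (Fin.succAbove j t')) with hd
        have hddep : ∀ j' : Fin n, ∑ j, d j * φ j' (es j) = 0 := by
          intro j'
          have := cramer_dep (fun j => fun j'' => φ j'' (es j)) j'
          simpa [hd, Dmat] using this
        have hp2 : ∀ j : Fin (n + 1), (-1:ℝ)^(j:ℕ) * (-1:ℝ)^(j:ℕ) = 1 := by
          intro j; rw [← mul_pow]; norm_num
        have hε2 : ε * ε = 1 := by rcases hεpm with he' | he' <;> rw [he'] <;> norm_num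
        have hdpos : ∀ j : Fin (n + 1), 0 < ((-1:ℝ)^(j:ℕ) * ε) * d j := by
          intro j
          rw [hd]
          have h1 := hdet' (fun t' => es (Fin.succAbove j t'))
            (hesmono.comp (Fin.strictMono_succAbove j)) (fun t' => hesq _)
          have h2 : ((-1:ℝ)^(j:ℕ) * ε) * ((-1:ℝ)^(j:ℕ) *
              Dmat φ (fun t' => es (Fin.succAbove j t')))
              = (ε * Dmat φ (fun t' => es (Fin.succAbove j t'))) *
                ((-1:ℝ)^(j:ℕ) * (-1:ℝ)^(j:ℕ)) := by ring
          rw [h2, hp2, mul_one]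
          exact h1
        have hdne : ∀ j, d j ≠ 0 := by
          intro j h0
          have := hdpos j
          rw [h0, mul_zero] at this
          exact lt_irrefl _ this
        set t := c 0 / d 0 with ht
        have htail_mono : StrictMono (fun jj : Fin n => es (Fin.succ jj)) :=
          hesmono.comp Fin.strictMono_succ
        have hct : ∀ j, c j - t * d j = 0 := by
          have hgdep : ∀ j' : Fin n, ∑ j, (c j - t * d j) * φ j' (es j) = 0 := by
            intro j'
            simp only [sub_mul, Finset.sum_sub_distrib]
            rw [hcdep j']
            have h1 : ∑ j, t * d j * φ j' (es j) = t * ∑ j, d j * φ j' (es j) := by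
              rw [Finset.mul_sum]
              apply Finset.sum_congr rfl
              intro j _
              ring
            rw [h1, hddep j', mul_zero, sub_zero]
          have hg0 : c 0 - t * d 0 = 0 := by
            rw [ht, div_mul_cancel₀ _ (hdne 0), sub_self]
          have htail := rows_indep φ (fun jj : Fin n => es (Fin.succ jj))
            (hNZ _ htail_mono (fun jj => hesq _))
            (fun jj => c (Fin.succ jj) - t * d (Fin.succ jj))
            (by
              intro j'
              have h1 := hgdep j'
              rw [Fin.sum_univ_succ, hg0, zero_mul, zero_add] at h1
              exact h1)
          intro j
          rcases Fin.eq_zero_or_eq_succ j with rfl | ⟨jj, rfl⟩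
          · exact hg0
          · exact congrFun htail jj
        have hc0ne : c 0 ≠ 0 := by
          rw [hc]
          apply mul_ne_zero (ne_of_gt (hwpos _))
          rcases hσpm (es 0) with hs | hs <;> rw [hs] <;> norm_num
        have htne : t ≠ 0 := by
          intro h0
          apply hc0ne
          have := hct 0
          rw [h0, zero_mul, sub_zero] at this
          exact this
        have hms2 : mySgn t * mySgn t = 1 := by
          rcases mySgn_pm t with hs | hs <;> rw [hs] <;> norm_num
        have hsigneq : ∀ j : Fin (n + 1), σ (es j) = mySgn t * (ε * (-1:ℝ)^(j:ℕ)) := by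
          intro j
          have hcj : c j = t * d j := by have := hct j; linarith
          have h1 : w (π j) * (σ (es j) * ((-1:ℝ)^(j:ℕ) * ε))
              = t * (((-1:ℝ)^(j:ℕ) * ε) * d j) := by
            calc w (π j) * (σ (es j) * ((-1:ℝ)^(j:ℕ) * ε))
                = (w (π j) * σ (es j)) * ((-1:ℝ)^(j:ℕ) * ε) := by ring
              _ = (t * d j) * ((-1:ℝ)^(j:ℕ) * ε) :=
                congrArg (fun y => y * ((-1:ℝ)^(j:ℕ) * ε)) hcj
              _ = t * (((-1:ℝ)^(j:ℕ) * ε) * d j) := by ring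
          have hsq : ((-1:ℝ)^(j:ℕ) * ε) * ((-1:ℝ)^(j:ℕ) * ε) = 1 := by
            calc ((-1:ℝ)^(j:ℕ) * ε) * ((-1:ℝ)^(j:ℕ) * ε)
                = ((-1:ℝ)^(j:ℕ) * (-1:ℝ)^(j:ℕ)) * (ε * ε) := by ring
              _ = 1 := by rw [hp2, hε2, one_mul]
          have hxpm : σ (es j) * ((-1:ℝ)^(j:ℕ) * ε) = 1 ∨
              σ (es j) * ((-1:ℝ)^(j:ℕ) * ε) = -1 := by
            rcases hσpm (es j) with hs | hs <;>
              rcases neg_one_pow_eq_or ℝ (j:ℕ) with hpp | hpp <;>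
              rcases hεpm with he' | he' <;> rw [hs, hpp, he'] <;> norm_num
          have hw := hwpos (π j)
          have hP := hdpos j
          rcases lt_trichotomy t 0 with hts | hts | hts
          · have hms : mySgn t = -1 := by
              unfold mySgn
              rw [if_neg (not_lt.mpr (le_of_lt hts))]
            have hRHS : t * (((-1:ℝ)^(j:ℕ) * ε) * d j) < 0 := mul_neg_of_neg_of_pos hts hP
            rw [← h1] at hRHS
            have hx : σ (es j) * ((-1:ℝ)^(j:ℕ) * ε) < 0 := by
              by_contra hcc
              push_neg at hcc
              nlinarith
            rcases hxpm with hx1 | hx1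
            · rw [hx1] at hx; norm_num at hx
            · have h3 := congrArg (· * ((-1:ℝ)^(j:ℕ) * ε)) hx1
              rw [mul_assoc, hsq, mul_one] at h3
              rw [h3, hms]
              ring
          · exact absurd hts htne
          · have hms : mySgn t = 1 := by
              unfold mySgn
              rw [if_pos hts]
            have hRHS : 0 < t * (((-1:ℝ)^(j:ℕ) * ε) * d j) := mul_pos hts hP
            rw [← h1] at hRHS
            have hx : 0 < σ (es j) * ((-1:ℝ)^(j:ℕ) * ε) := by
              by_contra hcc
              push_neg at hcc
              nlinarith
            rcases hxpm with hx1 | hx1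
            · have h3 := congrArg (· * ((-1:ℝ)^(j:ℕ) * ε)) hx1
              rw [mul_assoc, hsq, mul_one] at h3
              rw [h3, hms]
              ring
            · rw [hx1] at hx; norm_num at hx
        refine ⟨es, hesmono, hesq, mySgn t * ε, ?_, ?_⟩
        · rcases mySgn_pm t with hs | hs <;> rcases hεpm with he' | he' <;>
            rw [hs, he'] <;> norm_num
        · intro j
          show mySgn t * ε * (-1:ℝ)^(j:ℕ) * r (es j) = E
          rw [hσr _ (hesExt j), hsigneq j]
          calc mySgn t * ε * (-1:ℝ)^(j:ℕ) * (mySgn t * (ε * (-1:ℝ)^(j:ℕ)) * E)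
              = ((mySgn t * mySgn t) * (ε * ε) * ((-1:ℝ)^(j:ℕ) * (-1:ℝ)^(j:ℕ))) * E := by
                ring
            _ = E := by rw [hms2, hε2, hp2, one_mul, one_mul, one_mul]
    · -- separation : contradiction with best approximation
      exfalso
      have hKconv : Convex ℝ K := convex_convexHull ℝ _
      have hKcl : IsClosed K := (S.finite_toSet.isCompact_convexHull ℝ).isClosed
      obtain ⟨L, u, hL0, hLgt⟩ := geometric_hahn_banach_point_closed hKconv hKcl h0K
      have hu : 0 < u := by
        have : L 0 = 0 := map_zero L
        rw [this] at hL0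
        exact hL0
      set h : Fin n → ℝ := fun j => L (fun j' => if j = j' then 1 else 0) with hh
      have hLx : ∀ x : Fin n → ℝ, L x = ∑ j, x j * h j := by
        intro x
        conv_lhs => rw [pi_eq_sum_univ x]
        rw [map_sum]
        apply Finset.sum_congr rfl
        intro j _
        rw [map_smul, smul_eq_mul, hh]
      have hkey : ∀ e ∈ ExtF, u < σ e * poly n φ h e := by
        intro e he
        have hmem : v e ∈ K := subset_convexHull ℝ _ (by
          rw [hS]
          exact_mod_cast Finset.mem_image_of_mem v he)
        have := hLgt _ hmem
        rw [hLx] at this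
        have heq : ∑ j, v e j * h j = σ e * poly n φ h e := by
          rw [hv, poly, Finset.mul_sum]
          apply Finset.sum_congr rfl
          intro j _
          ring
        rw [heq] at this
        exact this
      set Mh := normZ q (poly n φ h) with hMh
      obtain ⟨e0, he0⟩ := hExt_ne
      have hMhpos : 0 < Mh := by
        have h1 := hkey e0 he0
        have h2 : σ e0 * poly n φ h e0 ≤ |poly n φ h e0| := by
          rcases hσpm e0 with hs | hs <;> rw [hs]
          · rw [one_mul]; exact le_abs_self _
          · rw [neg_one_mul]; exact neg_le_abs _
        have h3 : |poly n φ h e0| ≤ Mh := abs_le_normZ q _ (hExtq e0 he0)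
        linarith
      set E2 := (Finset.range (q + 1)).sup'
        (Finset.nonempty_range_iff.mpr q.succ_ne_zero)
        (fun x => if |r x| = E then 0 else |r x|) with hE2
      have hE2lt : E2 < E := by
        rw [hE2, Finset.sup'_lt_iff]
        intro x hx
        split
        · exact hEpos
        · have h1 : |r x| ≤ E := abs_le_normZ q r (Nat.lt_succ_iff.mp (Finset.mem_range.mp hx))
          exact lt_of_le_of_ne h1 (by assumption)
      have hE2ge : ∀ x ≤ q, |r x| ≠ E → |r x| ≤ E2 := by
        intro x hx hne
        rw [hE2]
        have h1 : (if |r x| = E then (0:ℝ) else |r x|) = |r x| := if_neg hne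
        rw [← h1]
        exact Finset.le_sup' (fun x => if |r x| = E then (0:ℝ) else |r x|)
          (Finset.mem_range.mpr (Nat.lt_succ_of_le hx))
      set δ := min E (E - E2) / (2 * Mh) with hδ
      have hminpos : 0 < min E (E - E2) := lt_min hEpos (by linarith)
      have hδpos : 0 < δ := div_pos hminpos (by linarith)
      have hδM : δ * Mh = min E (E - E2) / 2 := by
        rw [hδ]
        field_simp
      have hptwise : ∀ x ≤ q, |f x - poly n φ (a - δ • h) x| < E := by
        intro x hx
        have hfb : f x - poly n φ (a - δ • h) x = -(r x - δ * poly n φ h x) := by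
          rw [poly_sub_smul, hr]
          ring
        rw [hfb, abs_neg]
        by_cases hext : |r x| = E
        · have hxe : x ∈ ExtF := Finset.mem_filter.mpr ⟨Finset.mem_range.mpr (by omega), hext⟩
          have hσx : r x = σ x * E := hσr x hxe
          have hkx := hkey x hxe
          have habs : σ x * poly n φ h x ≤ |poly n φ h x| := by
            rcases hσpm x with hs | hs <;> rw [hs]
            · rw [one_mul]; exact le_abs_self _
            · rw [neg_one_mul]; exact neg_le_abs _
          have habs2 : |poly n φ h x| ≤ Mh := abs_le_normZ q _ hx
          have hσ2 : σ x * σ x = 1 := by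
            rcases hσpm x with hs | hs <;> rw [hs] <;> norm_num
          have h1 : r x - δ * poly n φ h x = σ x * (E - δ * (σ x * poly n φ h x)) := by
            rw [hσx]
            calc σ x * E - δ * poly n φ h x
                = σ x * E - δ * ((σ x * σ x) * poly n φ h x) := by rw [hσ2]; ring
              _ = σ x * (E - δ * (σ x * poly n φ h x)) := by ring
          rw [h1, abs_mul]
          have h2 : |σ x| = 1 := abs_mySgn _
          rw [h2, one_mul]
          have hspos : 0 < δ * (σ x * poly n φ h x) := mul_pos hδpos (by linarith)
          have hsle : δ * (σ x * poly n φ h x) ≤ min E (E - E2) / 2 := by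
            rw [← hδM]
            apply mul_le_mul_of_nonneg_left _ (le_of_lt hδpos)
            linarith
          have hless : δ * (σ x * poly n φ h x) < 2 * E := by
            have : min E (E - E2) ≤ E := min_le_left _ _
            linarith
          rw [abs_lt]
          constructor <;> linarith
        · have h2 : |r x| ≤ E2 := hE2ge x hx hext
          have h3 : |r x - δ * poly n φ h x| ≤ |r x| + |δ * poly n φ h x| := by
            rw [sub_eq_add_neg]
            calc |r x + -(δ * poly n φ h x)| ≤ |r x| + |(-(δ * poly n φ h x))| := abs_add_le _ _
              _ = |r x| + |δ * poly n φ h x| := by rw [abs_neg]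
          have h4 : |δ * poly n φ h x| ≤ δ * Mh := by
            rw [abs_mul, abs_of_pos hδpos]
            exact mul_le_mul_of_nonneg_left (abs_le_normZ q _ hx) (le_of_lt hδpos)
          have h5 : min E (E - E2) ≤ E - E2 := min_le_right _ _
          rw [hδM] at h4
          calc |r x - δ * poly n φ h x| ≤ |r x| + |δ * poly n φ h x| := h3
            _ ≤ E2 + min E (E - E2) / 2 := by linarith
            _ ≤ E2 + (E - E2) / 2 := by linarith
            _ < E := by linarith
      have hlt : normZ q (fun x => f x - poly n φ (a - δ • h) x) < E :=
        (normZ_lt_iff q _).mpr hptwise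
      have hEa : normZ q (fun x => f x - poly n φ a x) = E := by
        rw [hE]
        apply normZ_congr_abs
        intro x _
        rw [hr]
        exact abs_sub_comm _ _
      have := hbest (a - δ • h)
      rw [hEa] at this
      linarith


/-- For a linearly independent system `φ₁,…,φₙ ⊂ C[0,q]_ℤ` with
`1 ≤ n ≤ q`, the following are equivalent: (a) `{φₖ}` is a `T_ℤ`-system;
(b) for every `f ∈ C[0,q]_ℤ`, every best uniform approximant of `f` from `L_n`
admits an alternance set of length `n+1`; (c) all determinants over increasing
node choices are nonzero and have the same sign. -/
theorem stmt_1 (q n : ℕ) (hn : 1 ≤ n) (hnq : n ≤ q)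
    (φ : Fin n → ℕ → ℝ) (hli : LinIndepOn q n φ) :
    (IsTZ q n φ ↔
      ∀ (f : ℕ → ℝ) (a : Fin n → ℝ), IsBestApprox q n φ f a → HasAlternance q n φ f a)
    ∧
    (IsTZ q n φ ↔ DetsSameSign q n φ) := by
  refine ⟨⟨fun hA f a hba => ?_, fun hB => ?_⟩, A_to_C q n hn hnq φ, C_to_A q n hn hnq φ⟩
  · exact C_to_B q n hn hnq φ (A_to_C q n hn hnq φ hA) f a hba
  · exact C_to_A q n hn hnq φ (B_to_C q n hn hnq φ hB)

end DiscPaper
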